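/- For τ > 0 let w(r) = e^{−τr} (1 + 2rτ)^{1/2} for r > 0. Then w satisfies: (i) w(r) ≥ 0 for all r > 0; (ii) w'(r) = −2rτ² e^{−τr} (1+2rτ)^{−1/2} ≤ 0 for all r > 0; (iii) the identity (1/4)·w'(r)² + (1/2)·w(r)·w''(r) − w(r)·w'(r)/(2r) = r·τ³·e^{−2rτ}·(2 + 3rτ)/(1 + 2rτ) holds for all r > 0, and in particular this quantity is nonnegative, so that r·( w'(r)² + 2·w(r)·w''(r) ) ≥ 2·w(r)·w'(r) for all r > 0. -/

import Mathlib

/-- The weight `w(r) = e^{−τr}(1+2rτ)^{1/2}` for `τ > 0`. -/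
noncomputable def hardyWeight (τ : ℝ) (r : ℝ) : ℝ :=
  Real.exp (-τ * r) * (1 + 2 * r * τ) ^ ((1 : ℝ) / 2)

lemma hardyWeight_hasDerivAt (τ r : ℝ) (hU : 0 < 1 + 2 * r * τ) :
    HasDerivAt (hardyWeight τ)
      (-2 * r * τ ^ 2 * Real.exp (-τ * r) * (1 + 2 * r * τ) ^ (-(1 : ℝ) / 2)) r := by
  have hlin : HasDerivAt (fun s : ℝ => 1 + 2 * s * τ) (2 * τ) r := by
    simpa using (((hasDerivAt_id r).const_mul 2).mul_const τ).const_add 1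
  have hE : HasDerivAt (fun s : ℝ => Real.exp (-τ * s)) (Real.exp (-τ * r) * (-τ)) r := by
    have h : HasDerivAt (fun s : ℝ => -τ * s) (-τ) r := by simpa using (hasDerivAt_id r).const_mul (-τ)
    exact h.exp
  have hP : HasDerivAt (fun s : ℝ => (1 + 2 * s * τ) ^ ((1 : ℝ) / 2))
      (((1:ℝ)/2) * (1 + 2 * r * τ) ^ ((1:ℝ)/2 - 1) * (2 * τ)) r := by
    have := (Real.hasDerivAt_rpow_const (p := (1:ℝ)/2) (Or.inl hU.ne')).comp r hlin
    simpa [mul_comm, mul_assoc, Function.comp_def] using this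
  have total := hE.mul hP
  have e1 : (1 + 2 * r * τ) ^ ((1:ℝ)/2 - 1) = (1 + 2 * r * τ) ^ (-(1:ℝ)/2) := by norm_num
  have e2 : (1 + 2 * r * τ) ^ ((1:ℝ)/2)
      = (1 + 2 * r * τ) * (1 + 2 * r * τ) ^ (-(1:ℝ)/2) := by
    rw [show ((1:ℝ)/2) = 1 + (-(1:ℝ)/2) by norm_num, Real.rpow_add hU, Real.rpow_one]
  refine total.congr_deriv ?_
  rw [e1, e2]; ring

lemma hardyWeight_deriv_hasDerivAt (τ r : ℝ) (hU : 0 < 1 + 2 * r * τ) :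
    HasDerivAt (fun s : ℝ => -2 * s * τ ^ 2 * Real.exp (-τ * s) * (1 + 2 * s * τ) ^ (-(1 : ℝ) / 2))
      ((-2 * τ ^ 2 * Real.exp (-τ * r) + 2 * r * τ ^ 3 * Real.exp (-τ * r))
          * (1 + 2 * r * τ) ^ (-(1 : ℝ) / 2)
        + 2 * r * τ ^ 3 * Real.exp (-τ * r)
          * ((1 + 2 * r * τ) ^ (-(1 : ℝ) / 2) * (1 + 2 * r * τ) ^ (-(1 : ℝ) / 2)
              * (1 + 2 * r * τ) ^ (-(1 : ℝ) / 2))) r := by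
  have hlin : HasDerivAt (fun s : ℝ => 1 + 2 * s * τ) (2 * τ) r := by
    simpa using (((hasDerivAt_id r).const_mul 2).mul_const τ).const_add 1
  have hE : HasDerivAt (fun s : ℝ => Real.exp (-τ * s)) (Real.exp (-τ * r) * (-τ)) r := by
    have h : HasDerivAt (fun s : ℝ => -τ * s) (-τ) r := by simpa using (hasDerivAt_id r).const_mul (-τ)
    exact h.exp
  have hA : HasDerivAt (fun s : ℝ => -2 * s * τ ^ 2) (-2 * τ ^ 2) r := by
    simpa using ((hasDerivAt_id r).const_mul (-2)).mul_const (τ ^ 2)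
  have hP : HasDerivAt (fun s : ℝ => (1 + 2 * s * τ) ^ (-(1 : ℝ) / 2))
      ((-(1:ℝ)/2) * (1 + 2 * r * τ) ^ (-(1:ℝ)/2 - 1) * (2 * τ)) r := by
    have := (Real.hasDerivAt_rpow_const (p := -(1:ℝ)/2) (Or.inl hU.ne')).comp r hlin
    simpa [mul_comm, mul_assoc, Function.comp_def] using this
  have total := (hA.mul hE).mul hP
  have e3 : (1 + 2 * r * τ) ^ (-(1:ℝ)/2 - 1)
      = (1 + 2 * r * τ) ^ (-(1:ℝ)/2) * ((1 + 2 * r * τ) ^ (-(1:ℝ)/2) * (1 + 2 * r * τ) ^ (-(1:ℝ)/2)) := by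
    rw [show (-(1:ℝ)/2 - 1) = -(1:ℝ)/2 + (-(1:ℝ)/2 + -(1:ℝ)/2) by norm_num,
      Real.rpow_add hU, Real.rpow_add hU]
  refine total.congr_deriv ?_
  rw [e3, Pi.mul_apply]; ring

/-- For `τ > 0` and `w(r) = e^{−τr}(1+2rτ)^{1/2}`, for all `r > 0`:
(i) `w(r) ≥ 0`; (ii) `w'(r) = −2rτ² e^{−τr}(1+2rτ)^{−1/2} ≤ 0`;
(iii) `(1/4)w'² + (1/2)ww'' − ww'/(2r) = rτ³e^{−2rτ}(2+3rτ)/(1+2rτ) ≥ 0`, and hence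
`r(w'² + 2ww'') ≥ 2ww'`. -/
theorem hardyWeight_properties (τ : ℝ) (hτ : 0 < τ) (r : ℝ) (hr : 0 < r) :
    0 ≤ hardyWeight τ r
    ∧ deriv (hardyWeight τ) r
        = -2 * r * τ ^ 2 * Real.exp (-τ * r) * (1 + 2 * r * τ) ^ (-(1 : ℝ) / 2)
    ∧ deriv (hardyWeight τ) r ≤ 0
    ∧ (1 / 4) * (deriv (hardyWeight τ) r) ^ 2
        + (1 / 2) * hardyWeight τ r * deriv (deriv (hardyWeight τ)) r
        - hardyWeight τ r * deriv (hardyWeight τ) r / (2 * r)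
      = r * τ ^ 3 * Real.exp (-2 * r * τ) * (2 + 3 * r * τ) / (1 + 2 * r * τ)
    ∧ 0 ≤ r * τ ^ 3 * Real.exp (-2 * r * τ) * (2 + 3 * r * τ) / (1 + 2 * r * τ)
    ∧ 2 * hardyWeight τ r * deriv (hardyWeight τ) r
        ≤ r * ((deriv (hardyWeight τ) r) ^ 2
            + 2 * hardyWeight τ r * deriv (deriv (hardyWeight τ)) r) := by
  have hU : 0 < 1 + 2 * r * τ := by positivity
  set E := Real.exp (-τ * r) with hEdef
  set A := (1 + 2 * r * τ) ^ (-(1 : ℝ) / 2) with hAdef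
  have hEpos : 0 < E := Real.exp_pos _
  have hApos : 0 < A := Real.rpow_pos_of_pos hU _
  -- key rpow relation
  have hAu : A * A * (1 + 2 * r * τ) = 1 := by
    rw [hAdef, ← Real.rpow_add hU, show (-(1:ℝ)/2 + -(1:ℝ)/2) = -1 by norm_num,
      Real.rpow_neg_one]
    exact inv_mul_cancel₀ hU.ne'
  -- value of w
  have hW : hardyWeight τ r = E * ((1 + 2 * r * τ) * A) := by
    rw [hardyWeight, show ((1:ℝ)/2) = 1 + (-(1:ℝ)/2) by norm_num, Real.rpow_add hU,
      Real.rpow_one]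
  -- first derivative
  have hW1 : deriv (hardyWeight τ) r = -2 * r * τ ^ 2 * E * A :=
    (hardyWeight_hasDerivAt τ r hU).deriv
  -- second derivative, via eventual equality of the derivative with the closed form
  have hEv : ∀ᶠ s in nhds r, 0 < 1 + 2 * s * τ := by
    have h0 : -1 / (2 * τ) < r := lt_trans (div_neg_of_neg_of_pos (by norm_num) (by linarith)) hr
    filter_upwards [eventually_gt_nhds h0] with s hs
    have h1 : 0 < s + 1 / (2 * τ) := by
      have : -(1 / (2 * τ)) < s := by rw [← neg_div]; exact hs
      linarith
    have h2 : (1 / (2 * τ)) * (2 * τ) = 1 := by field_simp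
    nlinarith [mul_pos h1 (by linarith : (0:ℝ) < 2 * τ)]
  have hEvEq : deriv (hardyWeight τ) =ᶠ[nhds r]
      (fun s : ℝ => -2 * s * τ ^ 2 * Real.exp (-τ * s) * (1 + 2 * s * τ) ^ (-(1 : ℝ) / 2)) :=
    hEv.mono fun s hs => (hardyWeight_hasDerivAt τ s hs).deriv
  have hW2 : deriv (deriv (hardyWeight τ)) r
      = (-2 * τ ^ 2 * E + 2 * r * τ ^ 3 * E) * A + 2 * r * τ ^ 3 * E * (A * A * A) := by
    rw [hEvEq.deriv_eq]
    exact (hardyWeight_deriv_hasDerivAt τ r hU).deriv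
  have hE2 : Real.exp (-2 * r * τ) = E * E := by
    rw [hEdef, ← Real.exp_add]; ring_nf
  refine ⟨?_, ?_, ?_, ?_, ?_, ?_⟩
  · rw [hW]; positivity
  · rw [hW1]
  · rw [hW1]; nlinarith [mul_pos (mul_pos (mul_pos hr (pow_pos hτ 2)) hEpos) hApos]
  · rw [hW, hW1, hW2, hE2]
    have h3 : E * ((1 + 2 * r * τ) * A) * (-2 * r * τ ^ 2 * E * A) / (2 * r) = -(τ ^ 2 * E ^ 2 * (A * A * (1 + 2 * r * τ))) := by
      rw [div_eq_iff (by positivity)]; ring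
    rw [eq_div_iff hU.ne', h3]
    linear_combination (r*τ^3*E^2*(r*τ + (1+2*r*τ) + A*A*(1+2*r*τ) + 1)) * hAu
  · have h2 : 0 < 2 + 3 * r * τ := by positivity
    positivity
  · have key : (1 / 4) * (deriv (hardyWeight τ) r) ^ 2
        + (1 / 2) * hardyWeight τ r * deriv (deriv (hardyWeight τ)) r
        - hardyWeight τ r * deriv (hardyWeight τ) r / (2 * r)
        = r * τ ^ 3 * Real.exp (-2 * r * τ) * (2 + 3 * r * τ) / (1 + 2 * r * τ) := by
      rw [hW, hW1, hW2, hE2]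
      have h3 : E * ((1 + 2 * r * τ) * A) * (-2 * r * τ ^ 2 * E * A) / (2 * r) = -(τ ^ 2 * E ^ 2 * (A * A * (1 + 2 * r * τ))) := by
        rw [div_eq_iff (by positivity)]; ring
      rw [eq_div_iff hU.ne', h3]
      linear_combination (r*τ^3*E^2*(r*τ + (1+2*r*τ) + A*A*(1+2*r*τ) + 1)) * hAu
    have hQ : 0 ≤ r * τ ^ 3 * Real.exp (-2 * r * τ) * (2 + 3 * r * τ) / (1 + 2 * r * τ) := by
      have h2 : 0 < 2 + 3 * r * τ := by positivity
      positivity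
    have key2 : 0 ≤ (1 / 4) * (deriv (hardyWeight τ) r) ^ 2
        + (1 / 2) * hardyWeight τ r * deriv (deriv (hardyWeight τ)) r
        - hardyWeight τ r * deriv (hardyWeight τ) r / (2 * r) := key ▸ hQ
    rw [sub_nonneg, div_le_iff₀ (by linarith : (0:ℝ) < 2 * r)] at key2
    nlinarith [key2]
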